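/- arXiv:1907.01896 — 4 statements merged into one kernel-verified Lean document; each statement's English description precedes it below -/
import Mathlib

section
/- Let l_1, ..., l_m be linear functionals on ℝ^n. Then the function Δ(x) = min_i l_i(x) is non-positive on all of ℝ^n if and only if there exist indices i_1 < ... < i_r and strictly positive real numbers λ_1, ..., λ_r such that λ_1 l_{i_1} + ... + λ_r l_{i_r} = 0. -/
open RealInnerProductSpace


/-- `min_i l_i(x) ≤ 0` for all `x ∈ ℝ^n` iff there is a strictly
convex linear relation between some nonempty subfamily of the `l_i`. -/
theorem min_nonpos_iff_convex_relation (n m : ℕ) [NeZero m]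
    (l : Fin m → (EuclideanSpace ℝ (Fin n)) →ₗ[ℝ] ℝ) :
    (∀ x : EuclideanSpace ℝ (Fin n),
        Finset.univ.inf' Finset.univ_nonempty (fun i => l i x) ≤ 0) ↔
    ∃ (r : ℕ) (idx : Fin r → Fin m) (lam : Fin r → ℝ),
      0 < r ∧ StrictMono idx ∧ (∀ j, 0 < lam j) ∧
      ∑ j, lam j • l (idx j) = 0 := by
  classical
  set E := EuclideanSpace ℝ (Fin n)
  -- the vector representing `l i`
  set v : Fin m → E := fun i => WithLp.toLp 2 (fun j => l i (EuclideanSpace.single j 1)) with hv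
  have hx_decomp : ∀ x : E, x = ∑ j, x j • EuclideanSpace.single j (1:ℝ) := by
    intro x
    ext j
    rw [WithLp.ofLp_sum, Finset.sum_apply]
    simp [EuclideanSpace.single_apply]
  have hrepr : ∀ (i : Fin m) (x : E), l i x = ⟪v i, x⟫ := by
    intro i x
    conv_lhs => rw [hx_decomp x]
    rw [map_sum]
    simp only [map_smul, smul_eq_mul]
    rw [PiLp.inner_apply]
    simp [hv, RCLike.inner_apply, mul_comm]
  constructor
  · intro h
    by_contra hc
    -- 0 is not in the convex hull of the v i
    have h0 : (0:E) ∉ convexHull ℝ (Set.range v) := by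
      intro h0
      rw [convexHull_eq] at h0
      obtain ⟨ι, t, w, z, hw0, hw1, hz, hcm⟩ := h0
      rw [Finset.centerMass_eq_of_sum_1 _ _ hw1] at hcm
      -- choose preimage indices
      have hg : ∀ j ∈ t, ∃ i : Fin m, v i = z j := fun j hj => hz j hj
      choose g hgz using hg
      set g' : ι → Fin m := fun j => if hj : j ∈ t then g j hj else Classical.arbitrary _ with hg'
      set c : Fin m → ℝ := fun i => ∑ j ∈ t.filter (fun j => g' j = i), w j with hc'
      have hc0 : ∀ i, 0 ≤ c i := by
        intro i
        exact Finset.sum_nonneg fun j hj => hw0 j (Finset.mem_filter.mp hj).1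
      have hc1 : ∑ i, c i = 1 := by
        rw [hc']
        rw [← hw1]
        exact Finset.sum_fiberwise t g' w
      have hcv : ∑ i, c i • v i = 0 := by
        rw [← hcm, hc']
        rw [← Finset.sum_fiberwise t g' (fun j => w j • z j)]
        refine Finset.sum_congr rfl fun i _ => ?_
        rw [Finset.sum_smul]
        refine Finset.sum_congr rfl fun j hj => ?_
        obtain ⟨hjt, hji⟩ := Finset.mem_filter.mp hj
        rw [hg'] at hji
        simp only [hjt, dif_pos] at hji
        rw [← hji, hgz j hjt]
      -- relation among the l i
      have hcl : ∑ i, c i • l i = 0 := by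
        ext x
        simp only [LinearMap.sum_apply, LinearMap.smul_apply, smul_eq_mul,
          LinearMap.zero_apply]
        have : ∑ i, c i * l i x = ⟪∑ i, c i • v i, x⟫ := by
          rw [sum_inner]
          refine Finset.sum_congr rfl fun i _ => ?_
          rw [hrepr i x, real_inner_smul_left]
        rw [this, hcv, inner_zero_left]
      -- build the subfamily
      set T : Finset (Fin m) := Finset.univ.filter (fun i => 0 < c i) with hT
      have hTc : ∀ i ∈ T, 0 < c i := fun i hi => (Finset.mem_filter.mp hi).2
      have hsumT : ∑ i ∈ T, c i • l i = 0 := by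
        rw [← hcl]
        symm
        refine (Finset.sum_subset (Finset.subset_univ T) ?_).symm
        intro i _ hiT
        have : c i = 0 := by
          rcases (hc0 i).lt_or_eq with h' | h'
          · exact absurd (Finset.mem_filter.mpr ⟨Finset.mem_univ i, h'⟩) hiT
          · exact h'.symm
        simp [this]
      have hTne : T.Nonempty := by
        obtain ⟨i, _, hi⟩ := Finset.exists_ne_zero_of_sum_ne_zero
          (by rw [hc1]; norm_num : ∑ i, c i ≠ 0)
        exact ⟨i, Finset.mem_filter.mpr ⟨Finset.mem_univ i,
          (hc0 i).lt_of_ne (Ne.symm hi)⟩⟩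
      refine hc ⟨T.card, T.orderEmbOfFin rfl, fun j => c (T.orderEmbOfFin rfl j),
        Finset.card_pos.mpr hTne, (T.orderEmbOfFin rfl).strictMono,
        fun j => hTc _ (T.orderEmbOfFin_mem rfl j), ?_⟩
      rw [← hsumT]
      rw [← Finset.sum_coe_sort T (fun i => c i • l i)]
      exact Fintype.sum_equiv (T.orderIsoOfFin rfl).toEquiv _ _ (fun j => rfl)
    -- separate 0 from the hull
    obtain ⟨f, u, hu0, hfu⟩ :=
      geometric_hahn_banach_point_closed
        (convex_convexHull ℝ _)
        (((Set.finite_range v).isCompact_convexHull (𝕜 := ℝ)).isClosed) h0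
    rw [map_zero] at hu0
    set wv : E := (InnerProductSpace.toDual ℝ E).symm f with hwv
    have hfw : ∀ y : E, f y = ⟪wv, y⟫ := by
      intro y
      rw [hwv, InnerProductSpace.toDual_symm_apply]
    have hkey : ∀ i, 0 < l i wv := by
      intro i
      have := hfu (v i) (subset_convexHull ℝ _ (Set.mem_range_self i))
      rw [hfw] at this
      rw [hrepr i wv, real_inner_comm]
      linarith
    have := h wv
    rw [Finset.inf'_le_iff] at this
    obtain ⟨i, _, hi⟩ := this
    exact absurd hi (not_le.mpr (hkey i))
  · rintro ⟨r, idx, lam, hr, hmono, hpos, hsum⟩ x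
    by_contra hlt
    push_neg at hlt
    have hall : ∀ i, 0 < l i x := fun i =>
      hlt.trans_le (Finset.inf'_le _ (Finset.mem_univ i))
    have h0 : (∑ j, lam j • l (idx j)) x = 0 := by rw [hsum]; rfl
    simp only [LinearMap.sum_apply, LinearMap.smul_apply, smul_eq_mul] at h0
    haveI : NeZero r := ⟨hr.ne'⟩
    have hpos' : 0 < ∑ j, lam j * l (idx j) x :=
      Finset.sum_pos (fun j _ => mul_pos (hpos j) (hall (idx j))) Finset.univ_nonempty
    linarith
end

section
/- Let v_1, ..., v_m be nonzero vectors in a finite-dimensional inner product space such that the union of the half-spaces H_i = { x : ⟨v_i, x⟩ ≤ 0 } is the whole space. Then the origin 0 belongs to the convex hull of {v_1, ..., v_m}. -/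
open scoped RealInnerProductSpace

/-- if the half-spaces `H_i = {x : ⟪v_i, x⟫ ≤ 0}` of nonzero
vectors `v_1, …, v_m` cover the whole finite-dimensional inner product space,
then `0` lies in the convex hull of the `v_i`. -/
theorem zero_mem_convexHull_of_halfspaces_cover
    {V : Type*} [NormedAddCommGroup V] [InnerProductSpace ℝ V]
    [FiniteDimensional ℝ V] (m : ℕ) (v : Fin m → V) (hv : ∀ i, v i ≠ 0)
    (hcover : ∀ x : V, ∃ i, ⟪v i, x⟫ ≤ 0) :
    (0 : V) ∈ convexHull ℝ (Set.range v) := by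
  by_contra h0
  obtain ⟨f, u, hf0, hft⟩ := geometric_hahn_banach_point_closed
    (convex_convexHull ℝ _) (((Set.finite_range v).isCompact_convexHull (𝕜 := ℝ)).isClosed) h0
  set w := (InnerProductSpace.toDual ℝ V).symm f with hw
  obtain ⟨i, hi⟩ := hcover w
  have hfw : ∀ y, f y = ⟪w, y⟫ := fun y => by
    rw [hw, ← InnerProductSpace.toDual_apply_apply, LinearIsometryEquiv.apply_symm_apply]
  have h1 : u < f (v i) := hft _ (subset_convexHull ℝ _ ⟨i, rfl⟩)
  have h2 : (0:ℝ) < u := by simpa using hf0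
  rw [hfw, real_inner_comm] at h1
  linarith
end

section
/- The twelve points of ℝ^3 given by the vertices of a regular icosahedron inscribed in the unit sphere have pairwise Euclidean distances at least √(2 − 2/√5), and consequently twelve balls of radius r = 1/(√((5+√5)/2) − 1) centered at the points (1+r)·v_i (v_i the icosahedron vertices) are pairwise non-overlapping and each tangent to the unit ball. -/
open Real

/-- The golden ratio. -/
noncomputable def goldenφ : ℝ := (1 + Real.sqrt 5) / 2

/-- The 12 vertices of a regular icosahedron inscribed in the unit sphere. -/
noncomputable def icoVert : Fin 12 → EuclideanSpace ℝ (Fin 3) := fun i =>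
  (Real.sqrt (1 + goldenφ ^ 2))⁻¹ •
    (WithLp.equiv 2 (Fin 3 → ℝ)).symm
      (![![0, 1, goldenφ], ![0, 1, -goldenφ], ![0, -1, goldenφ], ![0, -1, -goldenφ],
         ![1, goldenφ, 0], ![1, -goldenφ, 0], ![-1, goldenφ, 0], ![-1, -goldenφ, 0],
         ![goldenφ, 0, 1], ![-goldenφ, 0, 1], ![goldenφ, 0, -1], ![-goldenφ, 0, -1]] i)

private lemma goldsq : goldenφ ^ 2 = goldenφ + 1 := by
  have h5 : Real.sqrt 5 ^ 2 = 5 := Real.sq_sqrt (by norm_num)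
  unfold goldenφ; nlinarith [h5]

private lemma goldge : 1 ≤ goldenφ := by
  have h5 : Real.sqrt 5 ^ 2 = 5 := Real.sq_sqrt (by norm_num)
  have h2 : (2:ℝ) ≤ Real.sqrt 5 := by nlinarith [Real.sqrt_nonneg 5]
  unfold goldenφ; linarith

private noncomputable def icoM : Fin 12 → Fin 3 → ℝ :=
  ![![0, 1, goldenφ], ![0, 1, -goldenφ], ![0, -1, goldenφ], ![0, -1, -goldenφ],
    ![1, goldenφ, 0], ![1, -goldenφ, 0], ![-1, goldenφ, 0], ![-1, -goldenφ, 0],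
    ![goldenφ, 0, 1], ![-goldenφ, 0, 1], ![goldenφ, 0, -1], ![-goldenφ, 0, -1]]

private lemma row0 (h : (0:ℕ) < 12) : icoM ⟨0,h⟩ = ![0, 1, goldenφ] := rfl
private lemma row1 (h : (1:ℕ) < 12) : icoM ⟨1,h⟩ = ![0, 1, -goldenφ] := rfl
private lemma row2 (h : (2:ℕ) < 12) : icoM ⟨2,h⟩ = ![0, -1, goldenφ] := rfl
private lemma row3 (h : (3:ℕ) < 12) : icoM ⟨3,h⟩ = ![0, -1, -goldenφ] := rfl
private lemma row4 (h : (4:ℕ) < 12) : icoM ⟨4,h⟩ = ![1, goldenφ, 0] := rfl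
private lemma row5 (h : (5:ℕ) < 12) : icoM ⟨5,h⟩ = ![1, -goldenφ, 0] := rfl
private lemma row6 (h : (6:ℕ) < 12) : icoM ⟨6,h⟩ = ![-1, goldenφ, 0] := rfl
private lemma row7 (h : (7:ℕ) < 12) : icoM ⟨7,h⟩ = ![-1, -goldenφ, 0] := rfl
private lemma row8 (h : (8:ℕ) < 12) : icoM ⟨8,h⟩ = ![goldenφ, 0, 1] := rfl
private lemma row9 (h : (9:ℕ) < 12) : icoM ⟨9,h⟩ = ![-goldenφ, 0, 1] := rfl
private lemma row10 (h : (10:ℕ) < 12) : icoM ⟨10,h⟩ = ![goldenφ, 0, -1] := rfl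
private lemma row11 (h : (11:ℕ) < 12) : icoM ⟨11,h⟩ = ![-goldenφ, 0, -1] := rfl

set_option maxHeartbeats 2000000 in
private lemma key (i j : Fin 12) (hij : i ≠ j) :
    (4:ℝ) ≤ (icoM i 0 - icoM j 0)^2 + (icoM i 1 - icoM j 1)^2 + (icoM i 2 - icoM j 2)^2 := by
  have h1 := goldsq
  have h2 := goldge
  fin_cases i <;> fin_cases j <;>
    simp only [row0, row1, row2, row3, row4, row5, row6, row7, row8, row9, row10, row11,
      Matrix.cons_val_zero, Matrix.cons_val_one, Matrix.cons_val_two, Matrix.head_cons,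
      Matrix.tail_cons, ne_eq, not_true_eq_false] at hij ⊢ <;>
    nlinarith [h1, h2]

private noncomputable def icoRaw : Fin 12 → EuclideanSpace ℝ (Fin 3) := fun i =>
  (WithLp.equiv 2 (Fin 3 → ℝ)).symm (icoM i)

private lemma icoVert_eq (i : Fin 12) :
    icoVert i = (Real.sqrt (1 + goldenφ ^ 2))⁻¹ • icoRaw i := rfl

set_option maxHeartbeats 1000000 in
private lemma raw_normsq (i : Fin 12) :
    ‖icoRaw i‖ = Real.sqrt (1 + goldenφ ^ 2) := by
  have h1 := goldsq
  rw [EuclideanSpace.norm_eq]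
  congr 1
  rw [Fin.sum_univ_three]
  simp only [icoRaw, WithLp.equiv_symm_apply, PiLp.toLp_apply, Real.norm_eq_abs, sq_abs]
  fin_cases i <;>
    simp only [row0, row1, row2, row3, row4, row5, row6, row7, row8, row9, row10, row11,
      Matrix.cons_val_zero, Matrix.cons_val_one, Matrix.cons_val_two, Matrix.head_cons,
      Matrix.tail_cons] <;>
    ring

set_option maxHeartbeats 1000000 in
private lemma raw_dist (i j : Fin 12) (hij : i ≠ j) : 2 ≤ dist (icoRaw i) (icoRaw j) := by
  rw [EuclideanSpace.dist_eq]
  have h4 := key i j hij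
  rw [show (2:ℝ) = Real.sqrt 4 by rw [show (4:ℝ) = 2^2 by norm_num, Real.sqrt_sq]; norm_num]
  apply Real.sqrt_le_sqrt
  rw [Fin.sum_univ_three]
  simp only [icoRaw, WithLp.equiv_symm_apply, PiLp.toLp_apply, Real.dist_eq, sq_abs]
  linarith [h4]

/-- the icosahedron vertices lie on the unit sphere with pairwise
distances at least `√(2 − 2/√5)`; consequently the twelve balls of radius
`r = 1/(√((5+√5)/2) − 1)` centered at `(1+r)·v_i` are pairwise non-overlapping
and each tangent to the unit ball. -/
theorem icosahedral_cluster (r : ℝ)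
    (hr : r = 1 / (Real.sqrt ((5 + Real.sqrt 5) / 2) - 1)) :
    (∀ i, ‖icoVert i‖ = 1) ∧
    (∀ i j, i ≠ j → Real.sqrt (2 - 2 / Real.sqrt 5) ≤ dist (icoVert i) (icoVert j)) ∧
    (∀ i j, i ≠ j → 2 * r ≤ dist ((1 + r) • icoVert i) ((1 + r) • icoVert j)) ∧
    (∀ i, dist ((1 + r) • icoVert i) (0 : EuclideanSpace ℝ (Fin 3)) = 1 + r) := by
  have h5 : Real.sqrt 5 ^ 2 = 5 := Real.sq_sqrt (by norm_num)
  have h5pos : (0:ℝ) < Real.sqrt 5 := Real.sqrt_pos.mpr (by norm_num)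
  set s := Real.sqrt (1 + goldenφ ^ 2) with hs_def
  have hφ := goldsq
  have hφ1 := goldge
  have hs2 : s ^ 2 = 1 + goldenφ ^ 2 := Real.sq_sqrt (by nlinarith)
  have hsnn : 0 ≤ s := Real.sqrt_nonneg _
  have hs1 : 1 < s := by nlinarith
  have hspos : 0 < s := by linarith
  have hse : Real.sqrt ((5 + Real.sqrt 5) / 2) = s := by
    rw [hs_def]
    congr 1
    rw [goldsq]
    unfold goldenφ
    ring
  have hrs : r = 1 / (s - 1) := by rw [hr, hse]
  have hrpos : 0 < r := by rw [hrs]; exact div_pos one_pos (by linarith)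
  -- part 1
  have p1 : ∀ i, ‖icoVert i‖ = 1 := by
    intro i
    rw [icoVert_eq, norm_smul, raw_normsq, ← hs_def, Real.norm_eq_abs,
      abs_of_pos (inv_pos.mpr hspos)]
    field_simp
  have pdist : ∀ i j, i ≠ j → 2 / s ≤ dist (icoVert i) (icoVert j) := by
    intro i j hij
    rw [icoVert_eq, icoVert_eq, dist_smul₀, Real.norm_eq_abs, ← hs_def,
      abs_of_pos (inv_pos.mpr hspos)]
    have := raw_dist i j hij
    rw [div_eq_inv_mul]
    exact mul_le_mul_of_nonneg_left this (by positivity)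
  -- part 2
  have p2 : ∀ i j, i ≠ j → Real.sqrt (2 - 2 / Real.sqrt 5) ≤ dist (icoVert i) (icoVert j) := by
    intro i j hij
    have heq : Real.sqrt (2 - 2 / Real.sqrt 5) = 2 / s := by
      rw [show 2 - 2 / Real.sqrt 5 = (2 / s) ^ 2 by
        rw [div_pow, hs2, goldsq]
        unfold goldenφ
        field_simp
        nlinarith]
      exact Real.sqrt_sq (by positivity)
    rw [heq]
    exact pdist i j hij
  refine ⟨p1, p2, ?_, ?_⟩
  · intro i j hij
    rw [dist_smul₀, Real.norm_eq_abs, abs_of_pos (by linarith : (0:ℝ) < 1 + r)]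
    have h1 := pdist i j hij
    have hs0 : s ≠ 0 := ne_of_gt hspos
    have hsm1 : s - 1 ≠ 0 := by intro h; nlinarith [h]
    have hkey : 2 * r ≤ (1 + r) * (2 / s) := by
      have : (1 + r) * (2 / s) = 2 * r := by
        rw [hrs]; field_simp; ring
      linarith [this]
    calc 2 * r ≤ (1 + r) * (2 / s) := hkey
      _ ≤ (1 + r) * dist (icoVert i) (icoVert j) :=
        mul_le_mul_of_nonneg_left h1 (by linarith)
  · intro i
    rw [dist_zero_right, norm_smul, p1, Real.norm_eq_abs,
      abs_of_pos (by linarith : (0:ℝ) < 1 + r), mul_one]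
end

section
/- Let F_1, ..., F_m : ℝ^n → ℝ with F_u(x) = l_u(x) + q_u(x), where l_u are linear forms and q_u quadratic forms. Suppose there exist λ_1, ..., λ_m > 0 with λ_1 l_1 + ... + λ_m l_m = 0, the span of l_1,...,l_m has dimension m−1, and the quadratic form Q = λ_1 q_1 + ... + λ_m q_m is negative definite on E = ⋂_u ker l_u. Then the origin is a strict local maximum of F(x) := min_u F_u(x): there is a neighborhood of 0 on which F(x) < F(0) = 0 for all x ≠ 0. -/
open Filter Topology

lemma quadraticMap_continuous {V : Type*} [NormedAddCommGroup V] [NormedSpace ℝ V]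
    [FiniteDimensional ℝ V] (Q : QuadraticForm ℝ V) : Continuous fun x => Q x := by
  have hQ : ∀ x, Q x = (QuadraticMap.associated (R := ℝ) Q) x x := by
    intro x
    conv_lhs => rw [← QuadraticMap.toQuadraticMap_associated ℝ Q]
    rfl
  set B := QuadraticMap.associated (R := ℝ) Q
  let C : V →ₗ[ℝ] (V →L[ℝ] ℝ) :=
    (LinearMap.toContinuousLinearMap : (V →ₗ[ℝ] ℝ) ≃ₗ[ℝ] (V →L[ℝ] ℝ)).toLinearMap ∘ₗ B
  have hC : Continuous C := C.continuous_of_finiteDimensional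
  have : Continuous fun x => C x x := hC.clm_apply continuous_id
  simpa [C, hQ] using this

/-- Proposition, sufficiency: for linear-quadratic functions
`F_u = l_u + q_u` with a strictly convex relation `∑ λ_u l_u = 0`, the span of
the `l_u` of dimension `m − 1`, and `Q = ∑ λ_u q_u` negative definite on
`E = ⋂ ker l_u`, the origin is a strict local maximum of `F = min_u F_u`. -/
theorem strict_local_max_of_neg_def (n m : ℕ) [NeZero m]
    (l : Fin m → (EuclideanSpace ℝ (Fin n)) →ₗ[ℝ] ℝ)
    (q : Fin m → QuadraticForm ℝ (EuclideanSpace ℝ (Fin n)))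
    (lam : Fin m → ℝ) (hlam : ∀ u, 0 < lam u)
    (hrel : ∑ u, lam u • l u = 0)
    (hdim : Module.finrank ℝ (Submodule.span ℝ (Set.range l)) = m - 1)
    (hneg : ∀ ξ ∈ ⨅ u, LinearMap.ker (l u), ξ ≠ 0 → (∑ u, lam u • q u) ξ < 0) :
    ∃ ε > 0, ∀ x : EuclideanSpace ℝ (Fin n), ‖x‖ < ε → x ≠ 0 →
      Finset.univ.inf' Finset.univ_nonempty (fun u => l u x + q u x) < 0 := by
  by_contra hcon
  push_neg at hcon
  choose x hxlt hx0 hF using fun k : ℕ => hcon (1/(k+1)) (by positivity)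
  have hxn : ∀ k, (0:ℝ) < ‖x k‖ := fun k => norm_pos_iff.mpr (hx0 k)
  set y : ℕ → EuclideanSpace ℝ (Fin n) := fun k => ‖x k‖⁻¹ • x k with hy
  have hys : ∀ k, y k ∈ Metric.sphere (0 : EuclideanSpace ℝ (Fin n)) 1 := by
    intro k
    simp [hy, norm_smul, abs_of_nonneg (inv_nonneg.mpr (norm_nonneg _)),
      inv_mul_cancel₀ (hxn k).ne']
  obtain ⟨a, ha, φ, hφ, hay⟩ :=
    (isCompact_sphere (0 : EuclideanSpace ℝ (Fin n)) 1).tendsto_subseq hys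
  have hxt : Tendsto (fun k => ‖x (φ k)‖) atTop (𝓝 0) := by
    have h1 : Tendsto (fun k : ℕ => 1/((k:ℝ)+1)) atTop (𝓝 0) :=
      tendsto_one_div_add_atTop_nhds_zero_nat
    exact (squeeze_zero (fun k => norm_nonneg _) (fun k => (hxlt k).le) h1).comp
      hφ.tendsto_atTop
  have hxky : ∀ k, x k = ‖x k‖ • y k := by
    intro k
    rw [hy]
    simp [smul_smul, mul_inv_cancel₀ (hxn k).ne']
  have key : ∀ (u : Fin m) (k : ℕ), 0 ≤ l u (y k) + ‖x k‖ * q u (y k) := by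
    intro u k
    have h0 : 0 ≤ l u (x k) + q u (x k) :=
      le_trans (hF k) (Finset.inf'_le _ (Finset.mem_univ u))
    rw [hxky k, map_smul, smul_eq_mul, QuadraticMap.map_smul, smul_eq_mul] at h0
    nlinarith [hxn k]
  -- limits of linear and quadratic parts along the subsequence
  have hlc : ∀ u : Fin m, Tendsto (fun k => l u (y (φ k))) atTop (𝓝 (l u a)) :=
    fun u => ((l u).continuous_of_finiteDimensional.tendsto a).comp hay
  have hqc : ∀ u : Fin m, Tendsto (fun k => q u (y (φ k))) atTop (𝓝 (q u a)) :=
    fun u => ((quadraticMap_continuous (q u)).tendsto a).comp hay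
  have hla : ∀ u, 0 ≤ l u a := by
    intro u
    have ht : Tendsto (fun k => l u (y (φ k)) + ‖x (φ k)‖ * q u (y (φ k))) atTop
        (𝓝 (l u a + 0 * q u a)) := (hlc u).add (hxt.mul (hqc u))
    rw [zero_mul, add_zero] at ht
    exact le_of_tendsto_of_tendsto' tendsto_const_nhds ht fun k => key u (φ k)
  have hsuml : ∀ z, ∑ u, lam u * l u z = 0 := by
    intro z
    simpa [smul_eq_mul] using LinearMap.congr_fun hrel z
  have hQk : ∀ k, 0 ≤ ∑ u, lam u * q u (y k) := by
    intro k
    have h1 : 0 ≤ ∑ u, lam u * (l u (y k) + ‖x k‖ * q u (y k)) :=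
      Finset.sum_nonneg fun u _ => mul_nonneg (hlam u).le (key u k)
    have h2 : ∑ u, lam u * (l u (y k) + ‖x k‖ * q u (y k))
        = ‖x k‖ * ∑ u, lam u * q u (y k) := by
      rw [Finset.mul_sum]
      rw [show (∑ u, lam u * (l u (y k) + ‖x k‖ * q u (y k)))
          = (∑ u, lam u * l u (y k)) + ∑ u, ‖x k‖ * (lam u * q u (y k)) by
        rw [← Finset.sum_add_distrib]; congr 1; ext u; ring]
      rw [hsuml (y k), zero_add]
    rw [h2] at h1
    nlinarith [hxn k]
  have hQa : 0 ≤ ∑ u, lam u * q u a := by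
    have ht : Tendsto (fun k => ∑ u, lam u * q u (y (φ k))) atTop
        (𝓝 (∑ u, lam u * q u a)) :=
      tendsto_finset_sum _ fun u _ => (tendsto_const_nhds.mul (hqc u))
    exact le_of_tendsto_of_tendsto' tendsto_const_nhds ht fun k => hQk (φ k)
  have hz : ∀ u, l u a = 0 := by
    have hall := (Finset.sum_eq_zero_iff_of_nonneg
      (fun u _ => mul_nonneg (hlam u).le (hla u))).mp (hsuml a)
    intro u
    exact (mul_eq_zero.mp (hall u (Finset.mem_univ u))).resolve_left (hlam u).ne'
  have hmem : a ∈ ⨅ u, LinearMap.ker (l u) := by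
    rw [Submodule.mem_iInf]
    exact fun u => LinearMap.mem_ker.mpr (hz u)
  have hane : a ≠ 0 := by
    intro h
    rw [h] at ha
    simp at ha
  have := hneg a hmem hane
  rw [show ((∑ u, lam u • q u) a) = ∑ u, lam u * q u a by
    simp [QuadraticMap.sum_apply, smul_eq_mul]] at this
  linarith
end
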